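/- Let (D_λ)_{λ∈Λ} be a family of integral domains, none of which is a field, each satisfying property (+), and let R = ∏_{λ∈Λ} D_λ. Then the maximal ideals of R are exactly the ideals of the form (U), where U is an ultrafilter in the Boolean algebra B containing an element of the form (V(a_λ))_{λ∈Λ} with a_λ ∈ D_λ \ {0} for all λ ∈ Λ. -/

import Mathlib

/-!
Common setup: `Λ` is an index set, `D λ` a family of commutative rings,
`R = ∏ λ, D λ` the product ring, and
`B = ∏ λ, P(max (D λ))` the product Boolean algebra of the power sets of the
sets of maximal ideals, realized as the Pi type `∀ l, Set (MaximalSpectrum (D l))`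
with its componentwise Boolean algebra structure (meet = componentwise ∩,
join = componentwise ∪, `⊥ = (∅)_λ`, complement componentwise, order = componentwise ⊆).
-/

variable {Λ : Type*} {D : Λ → Type*}

/-- `S(a) = (V(a_λ))_λ ∈ B`, where `V(x)` is the set of maximal ideals containing `x`. -/
def SFam [∀ l, CommRing (D l)] (a : ∀ l, D l) : ∀ l, Set (MaximalSpectrum (D l)) :=
  fun l => {P | a l ∈ P.asIdeal}

/-- `z(x) = {λ | x_λ = 0}`. -/
def ZFam [∀ l, CommRing (D l)] (x : ∀ l, D l) : Set Λ := {l | x l = 0}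

/-- A filter in a Boolean algebra: a nonempty subset not containing `⊥`, closed
under meets, and upward closed. -/
def IsBFilter {B : Type*} [BooleanAlgebra B] (U : Set B) : Prop :=
  U.Nonempty ∧ ⊥ ∉ U ∧ (∀ X ∈ U, ∀ Y ∈ U, X ⊓ Y ∈ U) ∧ (∀ Y ∈ U, ∀ Z, Y ≤ Z → Z ∈ U)

/-- An ultrafilter in a Boolean algebra: a filter containing `Y` or `Yᶜ` for every `Y`. -/
def IsBUltrafilter {B : Type*} [BooleanAlgebra B] (U : Set B) : Prop :=
  IsBFilter U ∧ ∀ Y, Y ∈ U ∨ Yᶜ ∈ U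

/-- Property (+): for all `r` and all nonzero `a` there is `d` lying in every maximal
ideal containing `a` but not `r`, and in no maximal ideal containing `r`. -/
def PropertyPlus (A : Type*) [CommRing A] : Prop :=
  ∀ r a : A, a ≠ 0 → ∃ d : A,
    (∀ M : Ideal A, M.IsMaximal → a ∈ M → r ∉ M → d ∈ M) ∧
    (∀ M : Ideal A, M.IsMaximal → r ∈ M → d ∉ M)

/-- Property (++): for every `r` there is `d` with `D(r) = V(d)`, i.e. the maximal
ideals containing `d` are exactly those not containing `r`. -/
def PropertyPlusPlus (A : Type*) [CommRing A] : Prop :=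
  ∀ r : A, ∃ d : A, ∀ P : MaximalSpectrum A, d ∈ P.asIdeal ↔ r ∉ P.asIdeal

section Aux

variable [∀ l, CommRing (D l)]

/-- Transfer from the product Boolean algebra `B` into the power set of `Σ l, max (D l)`. -/
def ToSetB (Y : ∀ l, Set (MaximalSpectrum (D l))) : Set (Σ l, MaximalSpectrum (D l)) :=
  {p | p.2 ∈ Y p.1}

lemma ToSetB_mono {Y Z : ∀ l, Set (MaximalSpectrum (D l))} (h : Y ≤ Z) :
    ToSetB Y ⊆ ToSetB Z := fun p hp => h p.1 hp

lemma ToSetB_inf (Y Z : ∀ l, Set (MaximalSpectrum (D l))) :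
    ToSetB (Y ⊓ Z) = ToSetB Y ∩ ToSetB Z := rfl

lemma ToSetB_compl (Y : ∀ l, Set (MaximalSpectrum (D l))) :
    ToSetB Yᶜ = (ToSetB Y)ᶜ := rfl

lemma ToSetB_bot : ToSetB (D := D) ⊥ = ∅ := rfl

lemma ToSetB_top : ToSetB (D := D) ⊤ = Set.univ := rfl

lemma SFam_zero : SFam (D := D) 0 = ⊤ :=
  funext fun _ => Set.eq_univ_of_forall fun P => P.asIdeal.zero_mem

lemma SFam_one : SFam (D := D) 1 = ⊥ :=
  funext fun _ => Set.eq_empty_iff_forall_notMem.2 fun P hP =>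
    P.isMaximal.ne_top ((Ideal.eq_top_iff_one _).2 hP)

lemma SFam_add (x y : ∀ l, D l) : SFam x ⊓ SFam y ≤ SFam (x + y) :=
  fun _ P hP => P.asIdeal.add_mem hP.1 hP.2

lemma SFam_mul_left (x y : ∀ l, D l) : SFam y ≤ SFam (x * y) :=
  fun l P hP => P.asIdeal.mul_mem_left (x l) hP

lemma exists_nonzero_nonunit (A : Type*) [CommRing A] [IsDomain A] (h : ¬IsField A) :
    ∃ c : A, c ≠ 0 ∧ ¬IsUnit c := by
  by_contra hc
  push_neg at hc
  exact h ⟨exists_pair_ne A, mul_comm, fun {a} ha => (hc a ha).exists_right_inv⟩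

/-- Every maximal ideal of the product contains an element with all coordinates nonzero. -/
lemma exists_mem_all_ne_zero [∀ l, IsDomain (D l)] (hnf : ∀ l, ¬IsField (D l))
    (M : Ideal (∀ l, D l)) (hM : M.IsMaximal) :
    ∃ a : ∀ l, D l, (∀ l, a l ≠ 0) ∧ a ∈ M := by
  choose c hc0 hcu using fun l => exists_nonzero_nonunit (D l) (hnf l)
  by_cases hcM : c ∈ M
  · exact ⟨c, hc0, hcM⟩
  · obtain ⟨y, i, hiM, hyi⟩ := hM.exists_inv hcM
    refine ⟨i, fun l => ?_, hiM⟩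
    intro h0
    have := congrFun hyi l
    simp only [Pi.add_apply, Pi.mul_apply, Pi.one_apply, h0, add_zero] at this
    exact hcu l (IsUnit.of_mul_eq_one _ ((mul_comm (c l) (y l)) ▸ this))

/-- The ideal associated to a `B`-ultrafilter containing some `S a` with all `a l ≠ 0`
is maximal. -/
lemma exists_maximal_of_bultrafilter [∀ l, IsDomain (D l)]
    (hplus : ∀ l, PropertyPlus (D l))
    (U : Set (∀ l, Set (MaximalSpectrum (D l)))) (hU : IsBUltrafilter U)
    (a : ∀ l, D l) (ha : ∀ l, a l ≠ 0) (haU : SFam a ∈ U) :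
    ∃ M : Ideal (∀ l, D l), M.IsMaximal ∧ ∀ r : ∀ l, D l, r ∈ M ↔ SFam r ∈ U := by
  obtain ⟨⟨hne, hbot, hinf, hup⟩, hultra⟩ := hU
  have htop : ⊤ ∈ U := by
    obtain ⟨Y, hY⟩ := hne; exact hup Y hY ⊤ le_top
  refine ⟨{ carrier := {r | SFam r ∈ U}
            zero_mem' := by show SFam 0 ∈ U; rwa [SFam_zero]
            add_mem' := fun {x y} hx hy => hup _ (hinf _ hx _ hy) _ (SFam_add x y)
            smul_mem' := fun c x hx => hup _ hx _ (by
              show SFam x ≤ SFam (c • x)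
              rw [smul_eq_mul]; exact SFam_mul_left c x) }, ?_, fun r => Iff.rfl⟩
  rw [Ideal.isMaximal_iff]
  constructor
  · show SFam 1 ∉ U
    rwa [SFam_one]
  · intro J x hle hx hxJ
    have hcompl : (SFam x)ᶜ ∈ U := (hultra (SFam x)).resolve_left hx
    choose d hd1 hd2 using fun l => hplus l (x l) (a l) (ha l)
    have hspan : ∀ l, ∃ u v : D l, u * x l + v * d l = 1 := by
      intro l
      have hsp : Ideal.span {x l, d l} = ⊤ := by
        by_contra h
        obtain ⟨P, hPmax, hPle⟩ := Ideal.exists_le_maximal _ h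
        exact hd2 l P hPmax (hPle (Ideal.subset_span (by simp)))
          (hPle (Ideal.subset_span (by simp)))
      exact Ideal.mem_span_pair.mp (hsp ▸ Submodule.mem_top)
    choose u v huv using hspan
    have h1 : SFam a ⊓ (SFam x)ᶜ ≤ SFam (1 - u * x) := by
      intro l P hP
      have hd : d l ∈ P.asIdeal := hd1 l P.asIdeal P.isMaximal hP.1 hP.2
      show (1 - u * x) l ∈ P.asIdeal
      have hcalc : (1 - u * x) l = v l * d l := by
        simp only [Pi.sub_apply, Pi.mul_apply, Pi.one_apply]
        linear_combination -(huv l)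
      rw [hcalc]
      exact P.asIdeal.mul_mem_left _ hd
    have h2 : (1 : ∀ l, D l) - u * x ∈ J := hle (hup _ (hinf _ haU _ hcompl) _ h1)
    have : (1 : ∀ l, D l) = (1 - u * x) + u * x := by ring
    rw [this]
    exact J.add_mem h2 (J.mul_mem_left u hxJ)

end Aux

/-- If every `D l` is an integral domain, not a field, satisfying property (+), then
the maximal ideals of `R` are exactly the ideals `(U)` for ultrafilters `U` in `B`
containing an element of the form `S a` with all components of `a` nonzero. -/
theorem stmt_7 [∀ l, CommRing (D l)] [∀ l, IsDomain (D l)]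
    (hnf : ∀ l, ¬IsField (D l)) (hplus : ∀ l, PropertyPlus (D l)) :
    (∀ M : Ideal (∀ l, D l), M.IsMaximal →
      ∃ U : Set (∀ l, Set (MaximalSpectrum (D l))), IsBUltrafilter U ∧
        (∃ a : ∀ l, D l, (∀ l, a l ≠ 0) ∧ SFam a ∈ U) ∧
        ∀ r : ∀ l, D l, r ∈ M ↔ SFam r ∈ U) ∧
    (∀ U : Set (∀ l, Set (MaximalSpectrum (D l))), IsBUltrafilter U →
      (∃ a : ∀ l, D l, (∀ l, a l ≠ 0) ∧ SFam a ∈ U) →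
      ∃ M : Ideal (∀ l, D l), M.IsMaximal ∧ ∀ r : ∀ l, D l, r ∈ M ↔ SFam r ∈ U) := by
  constructor
  · intro M hM
    classical
    obtain ⟨a, ha0, haM⟩ := exists_mem_all_ne_zero hnf M hM
    set s : Set (Set (Σ l, MaximalSpectrum (D l))) :=
      (fun r => ToSetB (SFam r)) '' (M : Set (∀ l, D l)) with hs
    -- finite intersection property
    have hFIP : ∀ t ⊆ s, t.Finite → (⋂₀ t).Nonempty := by
      intro t hts htf
      by_contra hne
      rw [Set.not_nonempty_iff_eq_empty] at hne
      haveI : Fintype t := htf.fintype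
      have hch : ∀ y : t, ∃ r : ∀ l, D l, r ∈ M ∧ ToSetB (SFam r) = (y : Set _) := by
        intro y
        obtain ⟨x, hx, he⟩ := hts y.2
        exact ⟨x, hx, he⟩
      choose r hrM hrt using hch
      have hspan : ∀ l, Ideal.span (Set.range fun y : t => r y l) = ⊤ := by
        intro l
        by_contra h
        obtain ⟨P, hPmax, hPle⟩ := Ideal.exists_le_maximal _ h
        have hmem : (⟨l, ⟨P, hPmax⟩⟩ : Σ l, MaximalSpectrum (D l)) ∈ ⋂₀ t := by
          intro y hy
          show _ ∈ ((⟨y, hy⟩ : t) : Set (Σ l, MaximalSpectrum (D l)))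
          rw [← hrt ⟨y, hy⟩]
          exact hPle (Ideal.subset_span ⟨⟨y, hy⟩, rfl⟩)
        rw [hne] at hmem
        exact hmem
      have hcf : ∀ l, ∃ cf : t → D l, ∑ y, cf y • r y l = 1 := by
        intro l
        have h1 : (1 : D l) ∈ Ideal.span (Set.range fun y : t => r y l) := by
          rw [hspan l]; exact Submodule.mem_top
        exact (Submodule.mem_span_range_iff_exists_fun _).mp h1
      choose cf hcf1 using hcf
      have h1M : (1 : ∀ l, D l) ∈ M := by
        have heq : (1 : ∀ l, D l) = ∑ y : t, (fun l => cf l y) * r y := by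
          funext l
          rw [Finset.sum_apply]
          simp only [Pi.mul_apply, Pi.one_apply, ← smul_eq_mul]
          exact (hcf1 l).symm
        rw [heq]
        exact Ideal.sum_mem _ fun y _ => M.mul_mem_left _ (hrM y)
      exact hM.ne_top ((Ideal.eq_top_iff_one M).mpr h1M)
    have hNeBot : (Filter.generate s).NeBot := by
      constructor
      intro hb
      have hmem : (∅ : Set (Σ l, MaximalSpectrum (D l))) ∈ Filter.generate s := by
        rw [hb]; exact Filter.mem_bot
      obtain ⟨t, hts, htf, hsub⟩ := Filter.mem_generate_iff.mp hmem
      obtain ⟨p, hp⟩ := hFIP t hts htf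
      exact hsub hp
    obtain ⟨G, hG⟩ := Ultrafilter.exists_le (Filter.generate s)
    have hmemG : ∀ r ∈ M, ToSetB (SFam r) ∈ G := by
      intro r hr
      exact hG (Filter.mem_generate_of_mem (Set.mem_image_of_mem _ hr))
    refine ⟨{Y | ToSetB Y ∈ G}, ⟨⟨⟨⊤, by rw [Set.mem_setOf_eq, ToSetB_top]; exact Filter.univ_mem⟩,
        by rw [Set.mem_setOf_eq, ToSetB_bot]; exact Ultrafilter.empty_notMem (f := G),
        fun X hX Y hY => by rw [Set.mem_setOf_eq, ToSetB_inf]; exact Filter.inter_mem hX hY,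
        fun Y hY Z hYZ => Filter.mem_of_superset hY (ToSetB_mono hYZ)⟩,
        fun Y => by
          rcases em (ToSetB Y ∈ G) with h | h
          · exact Or.inl h
          · exact Or.inr (by rw [Set.mem_setOf_eq, ToSetB_compl]
                             exact (Ultrafilter.compl_mem_iff_notMem (f := G)).mpr h)⟩,
        ⟨a, ha0, hmemG a haM⟩, ?_⟩
    intro r
    constructor
    · exact fun hr => hmemG r hr
    · intro hr
      by_contra hrM
      obtain ⟨y, i, hiM, hyi⟩ := hM.exists_inv hrM
      have hle : SFam r ⊓ SFam i ≤ SFam (y * r + i) :=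
        le_trans (inf_le_inf_right _ (SFam_mul_left y r)) (SFam_add (y * r) i)
      have hbot : SFam r ⊓ SFam i ≤ ⊥ := by
        rw [← SFam_one, ← hyi]; exact hle
      have : (∅ : Set (Σ l, MaximalSpectrum (D l))) ∈ G := by
        have hint : ToSetB (SFam r) ∩ ToSetB (SFam i) ∈ G :=
          Filter.inter_mem hr (hmemG i hiM)
        have hsub : ToSetB (SFam r) ∩ ToSetB (SFam i) ⊆ ∅ := by
          rw [← ToSetB_inf, ← ToSetB_bot]
          exact ToSetB_mono hbot
        exact Filter.mem_of_superset hint (fun p hp => (hsub hp).elim)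
      exact Ultrafilter.empty_notMem (f := G) this
  · intro U hU ⟨a, ha, haU⟩
    exact exists_maximal_of_bultrafilter hplus U hU a ha haU
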